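/- For n distinct reals t₁,…,tₙ, indices p ≠ s, λ ∈ ℝ, and d : ℕ → ℝ: ∑_{l ≠ s} ∂/∂t_l [ (t_l − t_s)(t_p − t_s) ∏_{i<j} |t_i − t_j|^{2λ d(j−i)} ] = (n + 2λ ∑_{i<j} d(j−i)) (t_p − t_s) ∏_{i<j} |t_i − t_j|^{2λ d(j−i)}. -/

import Mathlib

open Finset

private lemma hasDerivAt_abs_rpow_sub (a c x : ℝ) (hx : x ≠ a) :
    HasDerivAt (fun y : ℝ => |y - a| ^ c) (c * |x - a| ^ c / (x - a)) x := by
  have hsub : x - a ≠ 0 := sub_ne_zero.mpr hx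
  have h1 : HasDerivAt (fun y : ℝ => y - a) 1 x := (hasDerivAt_id x).sub_const a
  have h2 : HasDerivAt (|·|) (SignType.sign (x - a) : ℝ) (x - a) := hasDerivAt_abs hsub
  have h3 : HasDerivAt (fun y : ℝ => y ^ c) (c * |x - a| ^ (c - 1)) (|x - a|) :=
    Real.hasDerivAt_rpow_const (Or.inl (abs_ne_zero.mpr hsub))
  have h4 := (h3.comp x (h2.comp x h1))
  refine (show HasDerivAt (fun y : ℝ => |y - a| ^ c) _ x from h4).congr_deriv ?_
  have habs : |x - a| ^ c = |x - a| ^ (c - 1) * |x - a| := by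
    rw [← Real.rpow_add_one (abs_ne_zero.mpr hsub)]
    ring_nf
  rcases hsub.lt_or_gt with h | h
  · rw [habs, abs_of_neg h, sign_neg h, SignType.coe_neg_one]
    field_simp
  · rw [habs, abs_of_pos h, sign_pos h, SignType.coe_one]
    field_simp

private lemma pair_prod {n : ℕ} (F : Fin n → Fin n → ℝ) :
    ∏ i : Fin n, ∏ j ∈ univ.filter (fun j => i < j), F i j
      = ∏ q ∈ univ.filter (fun q : Fin n × Fin n => q.1 < q.2), F q.1 q.2 := by
  simp only [Finset.prod_filter]
  exact (Fintype.prod_prod_type (fun q : Fin n × Fin n => if q.1 < q.2 then F q.1 q.2 else 1)).symm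

private lemma pair_sum {n : ℕ} (F : Fin n → Fin n → ℝ) :
    ∑ i : Fin n, ∑ j ∈ univ.filter (fun j => i < j), F i j
      = ∑ q ∈ univ.filter (fun q : Fin n × Fin n => q.1 < q.2), F q.1 q.2 := by
  simp only [Finset.sum_filter]
  exact (Fintype.sum_prod_type (f := fun q : Fin n × Fin n => if q.1 < q.2 then F q.1 q.2 else 0)).symm

private lemma key_deriv {n : ℕ} (t : Fin n → ℝ) (hdist : Function.Injective t)
    (c : Fin n × Fin n → ℝ) (l s p : Fin n) (hls : l ≠ s) :
    HasDerivAt (fun x : ℝ => (x - t s) * (Function.update t l x p - Function.update t l x s) *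
        ∏ q ∈ univ.filter (fun q : Fin n × Fin n => q.1 < q.2),
          |Function.update t l x q.1 - Function.update t l x q.2| ^ c q)
      ((1 * (t p - t s) + (t l - t s) * (if l = p then 1 else 0)) *
          (∏ q ∈ univ.filter (fun q : Fin n × Fin n => q.1 < q.2), |t q.1 - t q.2| ^ c q)
        + ((t l - t s) * (t p - t s)) *
          ∑ q ∈ univ.filter (fun q : Fin n × Fin n => q.1 < q.2),
            (∏ j ∈ (univ.filter (fun q : Fin n × Fin n => q.1 < q.2)).erase q,
                |t j.1 - t j.2| ^ c j) *
            (if q.1 = l then c q * |t q.1 - t q.2| ^ c q / (t l - t q.2)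
             else if q.2 = l then c q * |t q.1 - t q.2| ^ c q / (t l - t q.1) else 0)) (t l) := by
  classical
  have htne : ∀ {i j : Fin n}, i ≠ j → t i - t j ≠ 0 :=
    fun h => sub_ne_zero.mpr (fun he => h (hdist he))
  have h1 : HasDerivAt (fun x : ℝ => x - t s) 1 (t l) := (hasDerivAt_id _).sub_const _
  have h2 : HasDerivAt (fun x : ℝ => Function.update t l x p - Function.update t l x s)
      (if l = p then 1 else 0) (t l) := by
    have hfs : (fun x : ℝ => Function.update t l x p - Function.update t l x s)
        = fun x : ℝ => Function.update t l x p - t s := by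
      funext x; rw [Function.update_of_ne (Ne.symm hls)]
    rw [hfs]
    by_cases hlp : l = p
    · subst hlp
      simp only [Function.update_self, if_pos rfl]
      exact (hasDerivAt_id _).sub_const _
    · rw [if_neg hlp]
      have : (fun x : ℝ => Function.update t l x p - t s) = fun _ : ℝ => t p - t s := by
        funext x; rw [Function.update_of_ne (fun h => hlp h.symm)]
      rw [this]
      exact hasDerivAt_const _ _
  have h3 : ∀ q ∈ univ.filter (fun q : Fin n × Fin n => q.1 < q.2),
      HasDerivAt (fun x : ℝ => |Function.update t l x q.1 - Function.update t l x q.2| ^ c q)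
        ((fun q : Fin n × Fin n =>
          if q.1 = l then c q * |t q.1 - t q.2| ^ c q / (t l - t q.2)
          else if q.2 = l then c q * |t q.1 - t q.2| ^ c q / (t l - t q.1) else 0) q) (t l) := by
    intro q hq
    have hq12 : q.1 ≠ q.2 := ne_of_lt (mem_filter.mp hq).2
    by_cases h1l : q.1 = l
    · have h2l : q.2 ≠ l := fun h => hq12 (h1l.trans h.symm)
      have hfs : (fun x : ℝ => |Function.update t l x q.1 - Function.update t l x q.2| ^ c q)
          = fun x : ℝ => |x - t q.2| ^ c q := by
        funext x; rw [h1l, Function.update_self, Function.update_of_ne h2l]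
      rw [hfs]
      simp only [if_pos h1l, h1l]
      exact hasDerivAt_abs_rpow_sub _ _ _ (fun h => h2l (hdist h).symm)
    · by_cases h2l : q.2 = l
      · have hfs : (fun x : ℝ => |Function.update t l x q.1 - Function.update t l x q.2| ^ c q)
            = fun x : ℝ => |x - t q.1| ^ c q := by
          funext x; rw [h2l, Function.update_self, Function.update_of_ne h1l, abs_sub_comm]
        rw [hfs]
        simp only [if_neg h1l, if_pos h2l, h2l, abs_sub_comm (t q.1)]
        exact hasDerivAt_abs_rpow_sub _ _ _ (fun h => h1l (hdist h).symm)
      · have hfs : (fun x : ℝ => |Function.update t l x q.1 - Function.update t l x q.2| ^ c q)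
            = fun _ : ℝ => |t q.1 - t q.2| ^ c q := by
          funext x; rw [Function.update_of_ne h1l, Function.update_of_ne h2l]
        rw [hfs]
        simp only [if_neg h1l, if_neg h2l]
        exact hasDerivAt_const _ _
  have hW := HasDerivAt.fun_finsetProd h3
  simp only [Function.update_eq_self, smul_eq_mul] at hW
  have := (h1.mul h2).mul hW
  simp only [Function.update_eq_self] at this
  refine this.congr_deriv ?_
  simp only [Pi.mul_apply, Function.update_eq_self]

private lemma key_sum {n : ℕ} (hn : 2 ≤ n) (t : Fin n → ℝ) (hdist : Function.Injective t)
    (c : Fin n × Fin n → ℝ) (p s : Fin n) (hps : p ≠ s) :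
    ∑ l ∈ univ.filter (fun l => l ≠ s),
      ((1 * (t p - t s) + (t l - t s) * (if l = p then 1 else 0)) *
          (∏ q ∈ univ.filter (fun q : Fin n × Fin n => q.1 < q.2), |t q.1 - t q.2| ^ c q)
        + ((t l - t s) * (t p - t s)) *
          ∑ q ∈ univ.filter (fun q : Fin n × Fin n => q.1 < q.2),
            (∏ j ∈ (univ.filter (fun q : Fin n × Fin n => q.1 < q.2)).erase q,
                |t j.1 - t j.2| ^ c j) *
            (if q.1 = l then c q * |t q.1 - t q.2| ^ c q / (t l - t q.2)
             else if q.2 = l then c q * |t q.1 - t q.2| ^ c q / (t l - t q.1) else 0))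
    = ((n : ℝ) + ∑ q ∈ univ.filter (fun q : Fin n × Fin n => q.1 < q.2), c q) *
        (t p - t s) *
        ∏ q ∈ univ.filter (fun q : Fin n × Fin n => q.1 < q.2), |t q.1 - t q.2| ^ c q := by
  classical
  have htne : ∀ {i j : Fin n}, i ≠ j → t i - t j ≠ 0 :=
    fun h => sub_ne_zero.mpr (fun he => h (hdist he))
  set S : Finset (Fin n × Fin n) := univ.filter (fun q : Fin n × Fin n => q.1 < q.2) with hS
  set G : Fin n × Fin n → ℝ := fun q => |t q.1 - t q.2| ^ c q with hG
  set P : ℝ := ∏ q ∈ S, G q with hP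
  set F : Finset (Fin n) := univ.filter (fun l => l ≠ s) with hF
  -- first piece
  rw [Finset.sum_add_distrib]
  have hA : ∑ l ∈ F, (1 * (t p - t s) + (t l - t s) * (if l = p then 1 else 0)) * P
      = ((n : ℝ) - 1) * ((t p - t s) * P) + (t p - t s) * P := by
    simp only [add_mul, one_mul]
    rw [Finset.sum_add_distrib, Finset.sum_const]
    congr 1
    · have hcard : F.card = n - 1 := by
        rw [hF, Finset.filter_ne', Finset.card_erase_of_mem (mem_univ s), card_univ,
          Fintype.card_fin]
      rw [hcard, nsmul_eq_mul, Nat.cast_sub (by omega), Nat.cast_one]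
    · simp only [mul_ite, ite_mul, mul_one, mul_zero, zero_mul]
      rw [Finset.sum_ite_eq' F p (fun l => (t l - t s) * P),
        if_pos (by simp [hF, hps])]
  rw [hA]
  -- second piece
  have hB : ∑ l ∈ F, ((t l - t s) * (t p - t s)) *
        ∑ q ∈ S, (∏ j ∈ S.erase q, G j) *
          (if q.1 = l then c q * G q / (t l - t q.2)
           else if q.2 = l then c q * G q / (t l - t q.1) else 0)
      = (t p - t s) * ((∑ q ∈ S, c q) * P) := by
    have h1 : ∀ l ∈ F, ((t l - t s) * (t p - t s)) *
          ∑ q ∈ S, (∏ j ∈ S.erase q, G j) *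
            (if q.1 = l then c q * G q / (t l - t q.2)
             else if q.2 = l then c q * G q / (t l - t q.1) else 0)
        = (t p - t s) * ∑ q ∈ S, (t l - t s) * ((∏ j ∈ S.erase q, G j) *
            (if q.1 = l then c q * G q / (t l - t q.2)
             else if q.2 = l then c q * G q / (t l - t q.1) else 0)) := by
      intro l _
      rw [Finset.mul_sum, Finset.mul_sum]
      apply Finset.sum_congr rfl
      intro q _
      ring
    rw [Finset.sum_congr rfl h1, ← Finset.mul_sum]
    congr 1
    rw [Finset.sum_comm]
    have h2 : ∀ q ∈ S, ∑ l ∈ F, (t l - t s) * ((∏ j ∈ S.erase q, G j) *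
          (if q.1 = l then c q * G q / (t l - t q.2)
           else if q.2 = l then c q * G q / (t l - t q.1) else 0))
        = c q * P := by
      intro q hq
      have hq12 : q.1 ≠ q.2 := ne_of_lt (by simpa [hS] using (mem_filter.mp hq).2)
      have h12 : t q.1 - t q.2 ≠ 0 := htne hq12
      have h21 : t q.2 - t q.1 ≠ 0 := htne (Ne.symm hq12)
      have h0 : ∑ l ∈ F, (t l - t s) * ((∏ j ∈ S.erase q, G j) *
            (if q.1 = l then c q * G q / (t l - t q.2)
             else if q.2 = l then c q * G q / (t l - t q.1) else 0))
          = ∑ l ∈ (univ : Finset (Fin n)), (t l - t s) * ((∏ j ∈ S.erase q, G j) *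
            (if q.1 = l then c q * G q / (t l - t q.2)
             else if q.2 = l then c q * G q / (t l - t q.1) else 0)) := by
        rw [hF, Finset.filter_ne']
        apply Finset.sum_erase
        simp
      rw [h0]
      have h1l : ∀ l : Fin n, (t l - t s) * ((∏ j ∈ S.erase q, G j) *
            (if q.1 = l then c q * G q / (t l - t q.2)
             else if q.2 = l then c q * G q / (t l - t q.1) else 0))
          = (if q.1 = l then (t l - t s) * ((∏ j ∈ S.erase q, G j) *
              (c q * G q / (t l - t q.2))) else 0)
            + (if q.2 = l then (t l - t s) * ((∏ j ∈ S.erase q, G j) *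
              (c q * G q / (t l - t q.1))) else 0) := by
        intro l
        by_cases ha : q.1 = l
        · have hb : ¬ q.2 = l := fun hb => hq12 (ha.trans hb.symm)
          rw [if_pos ha, if_pos ha, if_neg hb]
          ring
        · by_cases hb : q.2 = l
          · rw [if_neg ha, if_neg ha, if_pos hb, if_pos hb]
            ring
          · rw [if_neg ha, if_neg ha, if_neg hb, if_neg hb]
            ring
      rw [Finset.sum_congr rfl (fun l _ => h1l l), Finset.sum_add_distrib,
        Finset.sum_ite_eq univ q.1, Finset.sum_ite_eq univ q.2,
        if_pos (mem_univ _), if_pos (mem_univ _)]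
      have hEG : (∏ j ∈ S.erase q, G j) * G q = P := Finset.prod_erase_mul S G hq
      rw [← hEG]
      field_simp
      ring
    rw [Finset.sum_congr rfl h2, ← Finset.sum_mul]
  rw [hB]
  ring

/-- Differential identity (Eq. (id2)): for pairwise distinct `t₁,…,tₙ` and `p ≠ s`,
`∑_{l ≠ s} ∂/∂t_l [ (t_l − t_s)(t_p − t_s) ∏_{i<j} |t_i − t_j|^{2λ d(j−i)} ]
  = (n + 2λ ∑_{i<j} d(j−i)) (t_p − t_s) ∏_{i<j} |t_i − t_j|^{2λ d(j−i)}`. -/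
theorem stmt3 (n : ℕ) (hn : 2 ≤ n) (t : Fin n → ℝ)
    (hdist : Function.Injective t) (p s : Fin n) (hps : p ≠ s)
    (lam : ℝ) (d : ℕ → ℝ) :
    ∑ l ∈ univ.filter (fun l => l ≠ s),
      deriv (fun x : ℝ =>
        (x - t s) * (Function.update t l x p - Function.update t l x s) *
          ∏ i : Fin n, ∏ j ∈ univ.filter (fun j => i < j),
            |Function.update t l x i - Function.update t l x j| ^
              (2 * lam * d ((j : ℕ) - (i : ℕ)))) (t l)
    = ((n : ℝ) +
        2 * lam * ∑ i : Fin n, ∑ j ∈ univ.filter (fun j => i < j),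
          d ((j : ℕ) - (i : ℕ))) *
      (t p - t s) *
      ∏ i : Fin n, ∏ j ∈ univ.filter (fun j => i < j),
        |t i - t j| ^ (2 * lam * d ((j : ℕ) - (i : ℕ))) := by
  classical
  have hterm : ∀ l ∈ univ.filter (fun l : Fin n => l ≠ s),
      deriv (fun x : ℝ =>
        (x - t s) * (Function.update t l x p - Function.update t l x s) *
          ∏ i : Fin n, ∏ j ∈ univ.filter (fun j => i < j),
            |Function.update t l x i - Function.update t l x j| ^
              (2 * lam * d ((j : ℕ) - (i : ℕ)))) (t l)
      = (1 * (t p - t s) + (t l - t s) * (if l = p then 1 else 0)) *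
          (∏ q ∈ univ.filter (fun q : Fin n × Fin n => q.1 < q.2),
            |t q.1 - t q.2| ^ (2 * lam * d ((q.2 : ℕ) - (q.1 : ℕ))))
        + ((t l - t s) * (t p - t s)) *
          ∑ q ∈ univ.filter (fun q : Fin n × Fin n => q.1 < q.2),
            (∏ j ∈ (univ.filter (fun q : Fin n × Fin n => q.1 < q.2)).erase q,
                |t j.1 - t j.2| ^ (2 * lam * d ((j.2 : ℕ) - (j.1 : ℕ)))) *
            (if q.1 = l then (2 * lam * d ((q.2 : ℕ) - (q.1 : ℕ))) *
                |t q.1 - t q.2| ^ (2 * lam * d ((q.2 : ℕ) - (q.1 : ℕ))) / (t l - t q.2)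
             else if q.2 = l then (2 * lam * d ((q.2 : ℕ) - (q.1 : ℕ))) *
                |t q.1 - t q.2| ^ (2 * lam * d ((q.2 : ℕ) - (q.1 : ℕ))) / (t l - t q.1)
             else 0) := by
    intro l hl
    have hls : l ≠ s := by simpa using (mem_filter.mp hl).2
    have hfeq : (fun x : ℝ =>
        (x - t s) * (Function.update t l x p - Function.update t l x s) *
          ∏ i : Fin n, ∏ j ∈ univ.filter (fun j => i < j),
            |Function.update t l x i - Function.update t l x j| ^
              (2 * lam * d ((j : ℕ) - (i : ℕ))))
        = (fun x : ℝ =>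
        (x - t s) * (Function.update t l x p - Function.update t l x s) *
          ∏ q ∈ univ.filter (fun q : Fin n × Fin n => q.1 < q.2),
            |Function.update t l x q.1 - Function.update t l x q.2| ^
              (2 * lam * d ((q.2 : ℕ) - (q.1 : ℕ)))) := by
      funext x
      rw [pair_prod (fun i j => |Function.update t l x i - Function.update t l x j| ^
        (2 * lam * d ((j : ℕ) - (i : ℕ))))]
    rw [hfeq]
    exact (key_deriv t hdist
      (fun q : Fin n × Fin n => 2 * lam * d ((q.2 : ℕ) - (q.1 : ℕ))) l s p hls).deriv
  rw [Finset.sum_congr rfl hterm]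
  refine Eq.trans (key_sum hn t hdist
    (fun q : Fin n × Fin n => 2 * lam * d ((q.2 : ℕ) - (q.1 : ℕ))) p s hps) ?_
  rw [pair_sum (fun i j => d ((j : ℕ) - (i : ℕ))),
    pair_prod (fun i j => |t i - t j| ^ (2 * lam * d ((j : ℕ) - (i : ℕ)))),
    Finset.mul_sum]
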